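/- For N > 2, the map z from tip-partitions of a fixed rooted binary tree T with N labelled tips to transmission trees on the label set A is not surjective: there exists a transmission tree on A that is not of the form z(P) for any tip-partition P of T. -/

import Mathlib

/-- A rooted binary phylogenetic tree on node set `V` with tips labelled bijectively
by the host set `A`.  `parent v = none` iff `v` is the root; `depth` witnesses
acyclicity; every tip is childless and every internal (non-tip) node has exactly
two children. -/
structure PhyloTree (V A : Type) where
  parent : V → Option V
  root : V
  depth : V → ℕ
  parent_root : parent root = none
  root_unique : ∀ v, parent v = none → v = root
  depth_lt : ∀ u v, parent u = some v → depth v < depth u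
  tip : A → V
  tip_inj : Function.Injective tip
  tip_no_child : ∀ (a : A) (u : V), parent u ≠ some (tip a)
  binary : ∀ v : V, (¬ ∃ a, tip a = v) → {u : V | parent u = some v}.ncard = 2

/-- `T.anc u v` : `u` is an ancestor of `v` in `T` (following parents from `v`
reaches `u`; reflexive). -/
def PhyloTree.anc {V A : Type} (T : PhyloTree V A) (u v : V) : Prop :=
  Relation.ReflTransGen (fun x y => T.parent x = some y) v u

/-- A tip-partition of `T`: each node gets a label `δ`, the block of a label is
its fiber, each block is a connected subtree (witnessed by its root `blockRoot`,
an ancestor of every node of the block such that every node on the tree path from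
it to a block member is in the block), and the block of label `a` contains the
tip labelled `a` (hence exactly one tip, by `δ_tip`). -/
structure TipPartition {V A : Type} (T : PhyloTree V A) where
  δ : V → A
  δ_tip : ∀ a, δ (T.tip a) = a
  blockRoot : A → V
  blockRoot_label : ∀ a, δ (blockRoot a) = a
  blockRoot_anc : ∀ u, T.anc (blockRoot (δ u)) u
  block_connected : ∀ u w, T.anc (blockRoot (δ u)) w → T.anc w u → δ w = δ u

/-- The transmission (infector) map `z(P)` induced by a tip-partition: the
infector of host `a` is the label of the block containing the parent of the root
of `a`'s block, or `none` if that root is the root of `T`. -/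
def infector {V A : Type} (T : PhyloTree V A) (P : TipPartition T) (a : A) : Option A :=
  (T.parent (P.blockRoot a)).map P.δ

/-- `f` is a transmission tree (a rooted labelled tree on `A`, viewed as an
infector map): there is a unique root (host with no infector), and iterating the
infector map from any host reaches the root (equivalently `none`). -/
def IsTransmissionTree {A : Type} (f : A → Option A) : Prop :=
  (∃! r, f r = none) ∧ ∀ a, ∃ k, (fun o => Option.bind o f)^[k] (some a) = none

namespace PhyloTree
variable {V A : Type} (T : PhyloTree V A)

theorem anc_refl (v : V) : T.anc v v := Relation.ReflTransGen.refl

theorem anc_trans {u v w : V} (h1 : T.anc u v) (h2 : T.anc v w) : T.anc u w :=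
  Relation.ReflTransGen.trans h2 h1

theorem anc_single {u p : V} (h : T.parent u = some p) : T.anc p u :=
  Relation.ReflTransGen.single h

theorem depth_le_of_anc {u v : V} (h : T.anc u v) : T.depth u ≤ T.depth v := by
  induction h with
  | refl => exact le_rfl
  | tail _ hcu ih => exact le_of_lt (lt_of_lt_of_le (T.depth_lt _ _ hcu) ih)

theorem anc_root : ∀ v, T.anc T.root v := by
  have H : ∀ n v, T.depth v ≤ n → T.anc T.root v := by
    intro n
    induction n with
    | zero =>
      intro v hv
      cases h : T.parent v with
      | none => rw [T.root_unique v h]; exact T.anc_refl _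
      | some w => exact absurd (T.depth_lt v w h) (by omega)
    | succ n ih =>
      intro v hv
      cases h : T.parent v with
      | none => rw [T.root_unique v h]; exact T.anc_refl _
      | some w =>
        have := T.depth_lt v w h
        exact Relation.ReflTransGen.head h (ih w (by omega))
  exact fun v => H (T.depth v) v le_rfl

theorem anc_comp {u w v : V} (h1 : T.anc u v) (h2 : T.anc w v) :
    T.anc u w ∨ T.anc w u := by
  have H : ∀ n v, T.depth v ≤ n → T.anc u v → T.anc w v → T.anc u w ∨ T.anc w u := by
    intro n
    induction n with
    | zero =>
      intro v hv h1 h2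
      rcases Relation.ReflTransGen.cases_head h1 with h | ⟨v', hv', _⟩
      · subst h; exact Or.inr h2
      · exact absurd (T.depth_lt v v' hv') (by omega)
    | succ n ih =>
      intro v hv h1 h2
      rcases Relation.ReflTransGen.cases_head h1 with h | ⟨v', hv', h1'⟩
      · subst h; exact Or.inr h2
      · rcases Relation.ReflTransGen.cases_head h2 with h | ⟨v'', hv'', h2'⟩
        · subst h; exact Or.inl h1
        · rw [hv'] at hv''
          injection hv'' with hv''
          subst hv''
          have := T.depth_lt v v' hv'
          exact ih v' (by omega) h1' h2'
  exact H (T.depth v) v le_rfl h1 h2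

theorem children_eq {c c' m : V} (hc : T.parent c = some m) (hc' : T.parent c' = some m)
    (h : T.anc c c') : c = c' := by
  rcases Relation.ReflTransGen.cases_head h with h | ⟨y, hy, h'⟩
  · exact h.symm
  · rw [hc'] at hy
    injection hy with hy
    subst hy
    have h1 := T.depth_le_of_anc h'
    have h2 := T.depth_lt c m hc
    omega

end PhyloTree

/-- For `N > 2` hosts, `z` is not surjective: for any fixed rooted binary tree
`T` with tips labelled by `A`, some transmission tree on `A` is not `z(P)` for
any tip-partition `P` of `T`. -/
theorem z_not_surjective {V A : Type} [Fintype A] (hA : 2 < Nat.card A)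
    (T : PhyloTree V A) :
    ∃ f : A → Option A, IsTransmissionTree f ∧
      ∀ P : TipPartition T, infector T P ≠ f := by
  classical
  -- three distinct hosts
  have hcard : 2 < Fintype.card A := by rwa [Nat.card_eq_fintype_card] at hA
  have hA' : Nonempty A := Fintype.card_pos_iff.mp (by omega)
  obtain ⟨b1⟩ := hA'
  obtain ⟨b2, hb2, b3, hb3, h23⟩ := Finset.one_lt_card.mp
    (show 1 < (Finset.univ.erase b1).card by
      rw [Finset.card_erase_of_mem (Finset.mem_univ b1)]; simp; omega)
  have h12 : b1 ≠ b2 := (Finset.ne_of_mem_erase hb2).symm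
  have h13 : b1 ≠ b3 := (Finset.ne_of_mem_erase hb3).symm
  -- the deepest common ancestor `m` of all tips
  set S : Set V := {v | ∀ b : A, T.anc v (T.tip b)} with hS
  have hrootS : T.root ∈ S := fun b => T.anc_root _
  have hbound : ∀ v ∈ S, T.depth v ≤ T.depth (T.tip b1) :=
    fun v hv => T.depth_le_of_anc (hv b1)
  obtain ⟨m, hmS, hmd⟩ :
      ∃ m ∈ S, ∀ v ∈ S, T.depth v ≤ T.depth m := by
    have hfg := Nat.findGreatest_spec (P := fun n => ∃ v ∈ S, T.depth v = n)
      (hbound _ hrootS) ⟨T.root, hrootS, rfl⟩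
    obtain ⟨m, hmS, hmd⟩ := hfg
    exact ⟨m, hmS, fun v hv => hmd ▸
      Nat.le_findGreatest (hbound _ hv) ⟨v, hv, rfl⟩⟩
  -- m is not a tip
  have hmnt : ¬ ∃ e, T.tip e = m := by
    rintro ⟨e, he⟩
    obtain ⟨b, hb⟩ : ∃ b : A, b ≠ e := by
      by_cases h : b1 = e
      · exact ⟨b2, by rw [← h]; exact h12.symm⟩
      · exact ⟨b1, h⟩
    rcases Relation.ReflTransGen.cases_tail (hmS b) with h | ⟨c, _, hc⟩
    · exact hb (T.tip_inj (by rw [he, h]))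
    · rw [← he] at hc
      exact T.tip_no_child e c hc
  -- every tip hangs below a child of m
  have hchild : ∀ b : A, ∃ c, T.parent c = some m ∧ T.anc c (T.tip b) := by
    intro b
    rcases Relation.ReflTransGen.cases_tail (hmS b) with h | ⟨c, hc1, hc2⟩
    · exact absurd ⟨b, h.symm⟩ hmnt
    · exact ⟨c, hc2, hc1⟩
  obtain ⟨c1, hc1m, hc1⟩ := hchild b1
  obtain ⟨c2, hc2m, hc2⟩ := hchild b2
  obtain ⟨c3, hc3m, hc3⟩ := hchild b3
  -- pigeonhole: two of the three tips share the same child of m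
  obtain ⟨d, d', hdd', hdset⟩ := Set.ncard_eq_two.mp (T.binary m hmnt)
  have hmem : ∀ {c : V}, T.parent c = some m → c = d ∨ c = d' := by
    intro c hc
    have : c ∈ ({d, d'} : Set V) := hdset ▸ hc
    simpa using this
  obtain ⟨r, x, a, hrx, har, c, hcm, hcr, hcx⟩ :
      ∃ r x a : A, r ≠ x ∧ a ≠ r ∧
        ∃ c, T.parent c = some m ∧ T.anc c (T.tip r) ∧ T.anc c (T.tip x) := by
    by_cases h112 : c1 = c2
    · exact ⟨b1, b2, b3, h12, h13.symm, c1, hc1m, hc1, h112 ▸ hc2⟩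
    · by_cases h113 : c1 = c3
      · exact ⟨b1, b3, b2, h13, h12.symm, c1, hc1m, hc1, h113 ▸ hc3⟩
      · have h223 : c2 = c3 := by
          rcases hmem hc1m with h1 | h1 <;> rcases hmem hc2m with h2 | h2 <;>
            rcases hmem hc3m with h3 | h3 <;> simp_all
        exact ⟨b2, b3, b1, h23, h12, c2, hc2m, hc2, h223 ▸ hc3⟩
  -- the broom transmission tree
  refine ⟨fun b => if b = r then none else if b = a then some r else some a, ⟨⟨r, ?_, ?_⟩, ?_⟩, ?_⟩
  · simp
  · intro b hb
    by_contra hbr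
    by_cases hba : b = a <;> simp [hbr, hba, har] at hb
  · intro b
    refine ⟨3, ?_⟩
    by_cases hbr : b = r
    · simp [Function.iterate_succ_apply, hbr]
    · by_cases hba : b = a <;>
        simp [Function.iterate_succ_apply, hbr, hba, har, har.symm]
  · -- no tip-partition realizes this broom
    intro P hP
    have hPr := congrFun hP r
    have hPa := congrFun hP a
    simp only [infector, if_pos rfl] at hPr
    set u := P.blockRoot a with hu
    have hδu : P.δ u = a := P.blockRoot_label a
    -- blockRoot r is the root
    have hbrr : P.blockRoot r = T.root := by
      apply T.root_unique
      exact Option.map_eq_none_iff.mp hPr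
    -- u is an ancestor of every tip except tip r
    have hull : ∀ b : A, b ≠ r → T.anc u (T.tip b) := by
      intro b hb
      by_cases hba : b = a
      · subst hba
        have := P.blockRoot_anc (T.tip b)
        rwa [P.δ_tip] at this
      · have hPb := congrFun hP b
        simp only [infector, if_neg hb, if_neg hba] at hPb
        obtain ⟨q, hq1, hq2⟩ := Option.map_eq_some_iff.mp hPb
        have h1 : T.anc u q := by
          have := P.blockRoot_anc q
          rwa [hq2] at this
        have h2 : T.anc q (P.blockRoot b) := T.anc_single hq1
        have h3 : T.anc (P.blockRoot b) (T.tip b) := by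
          have := P.blockRoot_anc (T.tip b)
          rwa [P.δ_tip] at this
        exact T.anc_trans (T.anc_trans h1 h2) h3
    -- but u is not an ancestor of tip r
    have hnr : ¬ T.anc u (T.tip r) := by
      intro h
      have h1 : T.anc (P.blockRoot (P.δ (T.tip r))) u := by
        rw [P.δ_tip, hbrr]
        exact T.anc_root u
      have h2 := P.block_connected (T.tip r) u h1 h
      rw [P.δ_tip, hδu] at h2
      exact har h2
    -- geometry: u must in fact be an ancestor of tip r
    have hux : T.anc u (T.tip x) := hull x (fun h => hrx h.symm)
    rcases T.anc_comp hux hcx with h | h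
    · -- u above c, hence above m? no: u vs c.  u anc c ⇒ u anc tip r
      exact hnr (T.anc_trans h hcr)
    · -- c anc u : then c is a common ancestor of all tips, contradicting depth
      have hcall : ∀ b : A, T.anc c (T.tip b) := by
        intro b
        by_cases hbr' : b = r
        · exact hbr' ▸ hcr
        · exact T.anc_trans h (hull b hbr')
      have := hmd c hcall
      have := T.depth_lt c m hcm
      omega
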